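/- arXiv:1311.1255 — 2 statements merged into one kernel-verified Lean document; each statement's English description precedes it below -/
import Mathlib

section
/- In a free product G = A * B, if g ∈ G does not lie in the canonical image of A, then A ∩ g A g⁻¹ = {1}. -/
open Monoid

namespace FreeProdMalnormalAux

open Monoid.CoprodI

variable {ι : Type*} {G : ι → Type*} [∀ i, Group (G i)]

section

variable [DecidableEq ι] [∀ i, DecidableEq (G i)]

lemma word_prod_injective : Function.Injective (Word.prod : Word G → CoprodI G) := by
  intro w w' h
  have h1 := Word.equiv.right_inv w
  have h2 := Word.equiv.right_inv w'
  dsimp [Word.equiv] at h1 h2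
  rw [← h1, ← h2, h]

end

/-- The word obtained by dropping the first letter. -/
def tailWord (w : Word G) (x : (Σ i, G i)) (l : List (Σ i, G i)) (h : w.toList = x :: l) :
    Word G where
  toList := l
  ne_one := fun p hp => w.ne_one p (h ▸ List.mem_cons_of_mem _ hp)
  chain_ne := by
    have := w.chain_ne
    rw [h] at this
    exact this.tail

lemma prod_tailWord (w : Word G) (x : (Σ i, G i)) (l : List (Σ i, G i)) (h : w.toList = x :: l) :
    Word.prod w = of x.2 * Word.prod (tailWord w x l h) := by
  simp [Word.prod, tailWord, h]

/-- The word obtained by dropping the last letter. -/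
def initWord (w : Word G) (x : (Σ i, G i)) (l : List (Σ i, G i)) (h : w.toList = l ++ [x]) :
    Word G where
  toList := l
  ne_one := fun p hp => w.ne_one p (h ▸ List.mem_append_left _ hp)
  chain_ne := by
    have := w.chain_ne
    rw [h] at this
    exact this.prefix ⟨[x], rfl⟩

lemma prod_initWord (w : Word G) (x : (Σ i, G i)) (l : List (Σ i, G i)) (h : w.toList = l ++ [x]) :
    Word.prod w = Word.prod (initWord w x l h) * of x.2 := by
  simp [Word.prod, initWord, h]

section

variable [DecidableEq ι] [∀ i, DecidableEq (G i)]

lemma key (i : ι) : ∀ (n : ℕ) (w : Word G), w.toList.length ≤ n → ∀ (a a' : G i),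
    of a = Word.prod w * of a' * (Word.prod w)⁻¹ →
    Word.prod w ∈ (of : G i →* CoprodI G).range ∨ a' = 1 := by
  intro n
  induction n with
  | zero =>
    intro w hw a a' _
    left
    have : w.toList = [] := List.length_eq_zero_iff.mp (Nat.le_zero.mp hw)
    exact ⟨1, by simp [Word.prod, this]⟩
  | succ n ih =>
    intro w hw a a' h
    rcases hl : w.toList with _ | ⟨x, l⟩
    · left
      exact ⟨1, by simp [Word.prod, hl]⟩
    · by_cases hxi : x.1 = i
      · -- first letter is in G i
        obtain ⟨j, m⟩ := x
        dsimp at hxi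
        subst hxi
        have hp := prod_tailWord w ⟨j, m⟩ l hl
        set w' := tailWord w ⟨j, m⟩ l hl with hw'
        have hlen : w'.toList.length ≤ n := by
          have h2 : w.toList.length ≤ n + 1 := hw
          rw [hl] at h2
          simpa [hw', tailWord] using Nat.le_of_succ_le_succ h2
        have heq : of (m⁻¹ * a * m) = Word.prod w' * of a' * (Word.prod w')⁻¹ := by
          have h3 : of a = of m * (Word.prod w' * of a' * (Word.prod w')⁻¹) * (of m)⁻¹ := by
            rw [h, hp]; group
          rw [map_mul, map_mul, map_inv, h3]
          group
        rcases ih w' hlen _ _ heq with ⟨y, hy⟩ | h1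
        · exact Or.inl ⟨m * y, by rw [map_mul, hy, hp]⟩
        · exact Or.inr h1
      · -- first letter not in G i; look at the last letter
        have hne : w.toList ≠ [] := by rw [hl]; simp
        by_cases hyi : (w.toList.getLast hne).1 = i
        · -- last letter is in G i
          have hsplit : w.toList = w.toList.dropLast ++ [w.toList.getLast hne] :=
            (List.dropLast_append_getLast hne).symm
          rcases hy : w.toList.getLast hne with ⟨k, m⟩
          rw [hy] at hsplit
          rw [hy] at hyi
          dsimp at hyi
          subst hyi
          have hp := prod_initWord w ⟨k, m⟩ _ hsplit
          set w₁ := initWord w ⟨k, m⟩ w.toList.dropLast hsplit with hw₁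
          have hlen : w₁.toList.length ≤ n := by
            have h2 : w.toList.length ≤ n + 1 := hw
            have h3 : w.toList.dropLast.length = w.toList.length - 1 :=
              List.length_dropLast
            have h4 : w.toList.length ≠ 0 := fun h0 => hne (List.length_eq_zero_iff.mp h0)
            simp only [hw₁, initWord]
            omega
          have heq : of a = Word.prod w₁ * of (m * a' * m⁻¹) * (Word.prod w₁)⁻¹ := by
            rw [h, hp, map_mul, map_mul, map_inv]
            group
          rcases ih w₁ hlen _ _ heq with ⟨y, hy'⟩ | h1
          · exact Or.inl ⟨y * m, by rw [map_mul, hy', hp]⟩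
          · right
            have : a' = m⁻¹ * (m * a' * m⁻¹) * m := by group
            rw [this, h1]
            group
        · -- neither end is in G i
          right
          by_contra ha'
          obtain ⟨j, k, nw, hnw⟩ := NeWord.of_word w (fun he => hne (by rw [he]; rfl))
          have hlist : nw.toList = w.toList := by rw [← hnw]; rfl
          have hj : x.1 = j := by
            have h1 := NeWord.toList_head? nw
            rw [hlist, hl] at h1
            simpa using congrArg (Option.map Sigma.fst) h1
          have hk : (w.toList.getLast hne).1 = k := by
            have h1 := NeWord.toList_getLast? nw
            rw [hlist, List.getLast?_eq_getLast hne] at h1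
            simpa using congrArg (Option.map Sigma.fst) h1
          have hji : j ≠ i := by rw [← hj]; exact hxi
          have hki : k ≠ i := by rw [← hk]; exact hyi
          have hik : i ≠ k := Ne.symm hki
          set u : NeWord G j j :=
            NeWord.append (NeWord.append nw hki (NeWord.singleton a' ha')) hik nw.inv with hu
          have hprodnw : nw.prod = Word.prod w := by rw [NeWord.prod, hnw]
          have huprod : u.prod = of a := by
            rw [hu, NeWord.append_prod, NeWord.append_prod, NeWord.prod_singleton,
              NeWord.inv_prod, hprodnw, ← h]
          by_cases ha : a = 1
          · have h1 : Word.prod u.toWord = Word.prod Word.empty := by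
              show u.prod = _
              rw [huprod, ha, map_one, Word.prod_empty]
            have := word_prod_injective h1
            exact NeWord.toList_ne_nil u (by rw [show u.toList = u.toWord.toList from rfl, this]; rfl)
          · have hwa : Word.prod u.toWord =
                Word.prod ⟨[⟨i, a⟩], by simpa using ha, List.isChain_singleton _⟩ := by
              show u.prod = _
              rw [huprod]
              simp [Word.prod]
            have h2 := congrArg Word.toList (word_prod_injective hwa)
            have h3 : u.toList = [⟨i, a⟩] := h2
            have h4 := NeWord.toList_head? u
            rw [h3] at h4
            simp at h4
            exact hji h4.1.symm

end

lemma key' (i : ι) (g : CoprodI G)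
    (hg : g ∉ (of : G i →* CoprodI G).range) (a a' : G i)
    (h : of a = g * of a' * g⁻¹) : a' = 1 := by
  classical
  have hp : Word.prod (Word.equiv g) = g := Word.equiv.left_inv g
  rcases key i (Word.equiv g).toList.length (Word.equiv g) le_rfl a a'
      (by rw [hp]; exact h) with hr | h1
  · rw [hp] at hr
    exact absurd hr hg
  · exact h1

section Transfer

universe u v

variable (A : Type u) (B : Type v) [Group A] [Group B]

/-- The two-element family of groups. -/
abbrev F : Bool → Type (max u v) := fun b => cond b (ULift.{v} A) (ULift.{u} B)

instance : ∀ b, Group (F A B b) := fun b =>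
  match b with
  | true => inferInstanceAs (Group (ULift.{v} A))
  | false => inferInstanceAs (Group (ULift.{u} B))

/-- From the binary coproduct to the indexed one. -/
def φ : Coprod A B →* CoprodI (F A B) :=
  Coprod.lift
    ((CoprodI.of (i := (true : Bool))).comp
      ((MulEquiv.ulift.symm : A ≃* ULift.{v} A).toMonoidHom))
    ((CoprodI.of (i := (false : Bool))).comp
      ((MulEquiv.ulift.symm : B ≃* ULift.{u} B).toMonoidHom))

/-- From the indexed coproduct to the binary one. -/
def ψ : CoprodI (F A B) →* Coprod A B :=
  CoprodI.lift fun b =>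
    match b with
    | true => Coprod.inl.comp ((MulEquiv.ulift : ULift.{v} A ≃* A).toMonoidHom)
    | false => Coprod.inr.comp ((MulEquiv.ulift : ULift.{u} B ≃* B).toMonoidHom)

lemma ψ_comp_φ : (ψ A B).comp (φ A B) = MonoidHom.id _ := by
  apply Coprod.hom_ext
  · ext a
    show ψ A B (φ A B (Coprod.inl a)) = Coprod.inl a
    simp only [φ, Coprod.lift_apply_inl, MonoidHom.comp_apply]
    rw [ψ, CoprodI.lift_of]
    rfl
  · ext b
    show ψ A B (φ A B (Coprod.inr b)) = Coprod.inr b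
    simp only [φ, Coprod.lift_apply_inr, MonoidHom.comp_apply]
    rw [ψ, CoprodI.lift_of]
    rfl

lemma ψ_φ (x : Coprod A B) : ψ A B (φ A B x) = x := by
  have := DFunLike.congr_fun (ψ_comp_φ A B) x
  simpa using this

lemma φ_inl (a : A) :
    φ A B (Coprod.inl a) = CoprodI.of (M := F A B) (i := true) (MulEquiv.ulift.symm a) := by
  simp [φ]

end Transfer

end FreeProdMalnormalAux

open FreeProdMalnormalAux in
/-- In a free product `G = A * B`, if `g` does not lie in the canonical image of
`A`, then `A ⊓ g A g⁻¹ = ⊥`. -/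
theorem free_product_inl_inter_conj_inl_eq_bot
    (A B : Type*) [Group A] [Group B] (g : Coprod A B)
    (hg : g ∉ (Coprod.inl : A →* Coprod A B).range) :
    (Coprod.inl : A →* Coprod A B).range ⊓
      Subgroup.map (MulAut.conj g).toMonoidHom
        (Coprod.inl : A →* Coprod A B).range = ⊥ := by
  rw [eq_bot_iff]
  rintro x ⟨⟨a, ha⟩, y, ⟨a', ha'⟩, hy⟩
  have hx : x = g * Coprod.inl a' * g⁻¹ := by
    rw [← hy, ← ha']
    rfl
  have hφg : φ A B g ∉ (CoprodI.of : F A B true →* CoprodI (F A B)).range := by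
    rintro ⟨z, hz⟩
    apply hg
    refine ⟨MulEquiv.ulift z, ?_⟩
    have h2 : ψ A B (CoprodI.of (M := F A B) z) = Coprod.inl (MulEquiv.ulift z) := by
      rw [ψ, CoprodI.lift_of]
      rfl
    have h3 : ψ A B (φ A B g) = g := ψ_φ A B g
    rw [← hz, h2] at h3
    exact h3
  have heq : CoprodI.of (M := F A B) (i := true) (MulEquiv.ulift.symm a) =
      φ A B g * CoprodI.of (M := F A B) (i := true) (MulEquiv.ulift.symm a') * (φ A B g)⁻¹ := by
    rw [← φ_inl, ← φ_inl, ha, hx]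
    simp [map_mul, map_inv]
  have h1 := key' (G := F A B) true (φ A B g) hφg _ _ heq
  have ha'1 : a' = 1 := by
    have := congrArg (MulEquiv.ulift (α := A)) h1
    simpa using this
  have : x = 1 := by rw [hx, ha'1]; simp
  simp [this]
end

section
/- A nontrivial free product has trivial center: if A and B are nontrivial groups, then the center of A * B is the trivial subgroup. Consequently, any group with nontrivial center (such as ℤ) is freely indecomposable. -/
open Monoid

namespace FPCenter

variable {ι : Type*} {G : ι → Type*} [∀ i, Group (G i)]

open Monoid.CoprodI

/-- The reduced word of the inverse: reverse the list and invert each letter. -/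
def invWord (w : Word G) : Word G where
  toList := (w.toList.map fun l => (⟨l.1, l.2⁻¹⟩ : Σ i, G i)).reverse
  ne_one := by
    intro l hl
    rw [List.mem_reverse, List.mem_map] at hl
    obtain ⟨a, ha, rfl⟩ := hl
    exact inv_ne_one.2 (w.ne_one a ha)
  chain_ne := by
    rw [List.isChain_reverse, List.isChain_map]
    exact List.IsChain.imp (fun a b h => by exact Ne.symm h) w.chain_ne

theorem invWord_toList (w : Word G) :
    (invWord w).toList = (w.toList.map fun l => (⟨l.1, l.2⁻¹⟩ : Σ i, G i)).reverse := rfl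

theorem prod_invWord (w : Word G) : (invWord w).prod = w.prod⁻¹ := by
  rw [Word.prod, Word.prod, invWord_toList, List.prod_inv_reverse, ← List.map_reverse,
    List.map_map, List.map_map, List.map_reverse]
  simp [Function.comp_def]

theorem coprodI_center_eq_bot (i j : ι) (hij : i ≠ j)
    [Nontrivial (G i)] [Nontrivial (G j)] :
    Subgroup.center (CoprodI G) = ⊥ := by
  classical
  rw [eq_bot_iff]
  intro g hg
  rw [Subgroup.mem_bot]
  by_contra hg1
  have hcomm : ∀ x : CoprodI G, x * g = g * x := fun x => Subgroup.mem_center_iff.1 hg x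
  have hcomm' : ∀ x : CoprodI G, x * g⁻¹ = g⁻¹ * x := fun x =>
    Subgroup.mem_center_iff.1 ((Subgroup.center _).inv_mem hg) x
  have inj : Function.Injective (Word.prod : Word G → CoprodI G) :=
    Word.equiv.symm.injective
  set w : Word G := Word.equiv g with hw
  have hpw : w.prod = g := Word.equiv.symm_apply_apply g
  have hnil : w.toList ≠ [] := by
    intro h
    apply hg1
    rw [← hpw, Word.prod, h]
    simp
  obtain ⟨⟨i₀, x₀⟩, l, hl⟩ : ∃ a l', w.toList = a :: l' :=
    List.exists_cons_of_ne_nil hnil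
  have hfst : w.fstIdx = some i₀ := by rw [Word.fstIdx, hl]; rfl
  obtain ⟨k, hk, c, hc⟩ : ∃ k, k ≠ i₀ ∧ ∃ c : G k, c ≠ 1 := by
    rcases eq_or_ne i i₀ with rfl | h
    · exact ⟨j, Ne.symm hij, exists_ne 1⟩
    · exact ⟨i, h, exists_ne 1⟩
  have hmw : w.fstIdx ≠ some k := by
    rw [hfst]
    exact fun h => hk (Option.some.inj h).symm
  set X : Word G := Word.cons c w hmw hc with hX
  have hXp : X.prod = CoprodI.of c * g := by rw [hX, Word.prod_cons, hpw]
  have hIXp : (invWord X).prod = CoprodI.of c⁻¹ * g⁻¹ := by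
    rw [prod_invWord, hXp, mul_inv_rev, map_inv, ← hcomm' (CoprodI.of c)⁻¹]
  set v : Word G := invWord w with hv
  have hvp : v.prod = g⁻¹ := by rw [hv, prod_invWord, hpw]
  have hvnil : v.toList ≠ [] := by
    rw [hv, invWord_toList]
    simp [hnil]
  obtain ⟨⟨j₀, h₀⟩, t, ht⟩ : ∃ a t, v.toList = a :: t :=
    List.exists_cons_of_ne_nil hvnil
  have hIXl : (invWord X).toList = v.toList ++ [⟨k, c⁻¹⟩] := by
    rw [invWord_toList, hX, Word.cons_toList, List.map_cons, List.reverse_cons, hv,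
      invWord_toList]
  by_cases hkj : k = j₀
  · subst hkj
    have hchain : (v.toList).Chain' fun a b => a.1 ≠ b.1 := v.chain_ne
    rw [ht] at hchain
    set t' : Word G := ⟨t, fun x hx => v.ne_one x (ht ▸ List.mem_cons_of_mem _ hx),
      hchain.tail⟩ with ht'
    have hvt : v.prod = CoprodI.of h₀ * t'.prod := by
      rw [Word.prod, ht, List.map_cons, List.prod_cons]; rfl
    have key : CoprodI.of c⁻¹ * g⁻¹ = CoprodI.of (c⁻¹ * h₀) * t'.prod := by
      rw [map_mul, mul_assoc, ← hvt, hvp]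
    have hlenIX : (invWord X).toList.length = t.length + 2 := by
      rw [hIXl, ht]; simp
    by_cases h1 : c⁻¹ * h₀ = 1
    · have hpeq : t'.prod = (invWord X).prod := by
        rw [hIXp, key, h1, map_one, one_mul]
      have heq := congrArg (fun u : Word G => u.toList.length) (inj hpeq)
      simp only [hlenIX] at heq
      simp [ht'] at heq
    · have hft : t'.fstIdx ≠ some k := by
        have := (List.isChain_cons.1 hchain).1
        rw [Word.fstIdx]
        intro hcon
        obtain ⟨b, hb, hb2⟩ := Option.map_eq_some_iff.1 hcon
        exact this b hb hb2.symm
      have hpeq : (Word.cons (c⁻¹ * h₀) t' hft h1).prod = (invWord X).prod := by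
        rw [Word.prod_cons, hIXp, key]
      have heq := congrArg (fun u : Word G => u.toList.length) (inj hpeq)
      simp only [Word.cons_toList, hlenIX] at heq
      simp [ht'] at heq
  · have hfv : v.fstIdx ≠ some k := by
      rw [Word.fstIdx, ht]
      simp only [List.head?_cons, Option.map_some]
      exact fun hcon => hkj (Option.some.inj hcon).symm
    have hpeq : (Word.cons c⁻¹ v hfv (inv_ne_one.2 hc)).prod = (invWord X).prod := by
      rw [Word.prod_cons, hvp, hIXp]
    have heq := congrArg Word.toList (inj hpeq)
    rw [Word.cons_toList, hIXl, ht, List.cons_append] at heq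
    injection heq with h1 _
    exact hkj (congrArg Sigma.fst h1)

theorem center_eq_bot_of_mulEquiv {H K : Type*} [Group H] [Group K] (e : H ≃* K)
    (hK : Subgroup.center K = ⊥) : Subgroup.center H = ⊥ := by
  rw [eq_bot_iff]
  intro x hx
  rw [Subgroup.mem_bot]
  have hex : e x ∈ Subgroup.center K := by
    rw [Subgroup.mem_center_iff]
    intro k
    have h := Subgroup.mem_center_iff.1 hx (e.symm k)
    calc k * e x = e (e.symm k * x) := by rw [map_mul, e.apply_symm_apply]
      _ = e (x * e.symm k) := by rw [h]
      _ = e x * k := by rw [map_mul, e.apply_symm_apply]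
  rw [hK, Subgroup.mem_bot] at hex
  have : e x = e 1 := by rw [hex, map_one]
  exact e.injective this

instance instGroupCond (A : Type u) (B : Type v) [Group A] [Group B] :
    ∀ b : Bool, Group (cond b (ULift.{max u v} A) (ULift.{max u v} B)) := fun b => by
  cases b
  · exact inferInstanceAs (Group (ULift B))
  · exact inferInstanceAs (Group (ULift A))

/-- The binary coproduct is isomorphic to the indexed coproduct over `Bool`. -/
def coprodEquivCoprodI (A : Type u) (B : Type v) [Group A] [Group B] :
    Coprod (ULift.{max u v} A) (ULift.{max u v} B) ≃* CoprodI (fun b : Bool => cond b (ULift.{max u v} A) (ULift.{max u v} B)) :=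
  MonoidHom.toMulEquiv
    (Coprod.lift (CoprodI.of (M := fun b : Bool => cond b (ULift.{max u v} A) (ULift.{max u v} B)) (i := true))
      (CoprodI.of (M := fun b : Bool => cond b (ULift.{max u v} A) (ULift.{max u v} B)) (i := false)))
    (CoprodI.lift (fun b => Bool.rec
      (motive := fun b => (cond b (ULift.{max u v} A) (ULift.{max u v} B)) →*
        Coprod (ULift.{max u v} A) (ULift.{max u v} B)) Coprod.inr Coprod.inl b))
    (Coprod.hom_ext (by ext a; exact CoprodI.lift_of _ _) (by ext b; exact CoprodI.lift_of _ _))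
    (CoprodI.ext_hom _ _ (fun b => by cases b <;> (ext x; simp only [MonoidHom.comp_apply]; rw [CoprodI.lift_of]; rfl)))

theorem coprod_center_eq_bot (A : Type u) (B : Type v) [Group A] [Group B]
    [Nontrivial A] [Nontrivial B] : Subgroup.center (Coprod A B) = ⊥ := by
  haveI : Nontrivial (cond true (ULift.{max u v} A) (ULift.{max u v} B)) :=
    inferInstanceAs (Nontrivial (ULift A))
  haveI : Nontrivial (cond false (ULift.{max u v} A) (ULift.{max u v} B)) :=
    inferInstanceAs (Nontrivial (ULift B))
  have h1 : Subgroup.center (CoprodI (fun b : Bool =>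
      cond b (ULift.{max u v} A) (ULift.{max u v} B))) = ⊥ :=
    coprodI_center_eq_bot true false (by simp)
  have h2 := center_eq_bot_of_mulEquiv (coprodEquivCoprodI A B) h1
  exact center_eq_bot_of_mulEquiv
    (MulEquiv.coprodCongr MulEquiv.ulift.symm MulEquiv.ulift.symm) h2

end FPCenter

/-- A nontrivial free product has trivial center; consequently any group with
nontrivial center is not isomorphic to a free product of two nontrivial
groups (so it is freely indecomposable into nontrivial factors). -/
theorem free_product_center_eq_bot
    (A B : Type*) [Group A] [Group B] [Nontrivial A] [Nontrivial B] :
    Subgroup.center (Coprod A B) = ⊥ ∧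
      ∀ (H : Type*) [Group H], Subgroup.center H ≠ ⊥ →
        IsEmpty (H ≃* Coprod A B) := by
  refine ⟨FPCenter.coprod_center_eq_bot A B, ?_⟩
  intro H _ hH
  exact ⟨fun e => hH (FPCenter.center_eq_bot_of_mulEquiv e
    (FPCenter.coprod_center_eq_bot A B))⟩
end
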